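/- Let g₁, g₂ ∈ ℝ^m with G = [g₁ g₂] of rank 2, and let b ∈ ℝ^m. Then the unique solution of min_{y₁,y₂ ≥ 0} ‖y₁ g₁ + y₂ g₂ − b‖ is given by y₂* = (1/‖g₂‖²)·[bᵀg₂ − (g₂ᵀg₁)·[(‖g₂‖² bᵀg₁ − bᵀg₂·g₂ᵀg₁)/(‖g₁‖²‖g₂‖² − (g₁ᵀg₂)²)]₊]₊ and y₁* = (1/‖g₁‖²)·[bᵀg₁ − (g₂ᵀg₁) y₂*]₊. -/

import Mathlib

open scoped RealInnerProductSpace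


lemma key_real (a d c β1 β2 y₂ y₁ : ℝ) (ha : 0 < a) (hd : 0 < d)
    (hD : 0 < a * d - c ^ 2)
    (hy2 : y₂ = max (β2 - c * max ((d * β1 - β2 * c) / (a * d - c ^ 2)) 0) 0 / d)
    (hy1 : y₁ = max (β1 - c * y₂) 0 / a) :
    0 ≤ c * y₁ + d * y₂ - β2 ∧ y₂ * (c * y₁ + d * y₂ - β2) = 0 := by
  rcases le_or_gt (d * β1 - β2 * c) 0 with hu | hu
  · -- t = 0
    have ht : max ((d * β1 - β2 * c) / (a * d - c ^ 2)) 0 = 0 :=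
      max_eq_right (div_nonpos_of_nonpos_of_nonneg hu hD.le)
    rw [ht, mul_zero, sub_zero] at hy2
    rcases le_or_gt β2 0 with hb2 | hb2
    · -- y₂ = 0
      rw [max_eq_right hb2, zero_div] at hy2
      subst hy2
      rw [mul_zero, sub_zero] at hy1
      rcases le_or_gt β1 0 with hb1 | hb1
      · rw [max_eq_right hb1, zero_div] at hy1
        subst hy1
        exact ⟨by nlinarith, by ring⟩
      · rw [max_eq_left hb1.le] at hy1
        subst hy1
        refine ⟨?_, by ring⟩
        have hc : c < 0 := by nlinarith
        have hkey : 0 ≤ c * β1 - a * β2 := by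
          nlinarith [mul_pos (neg_pos.mpr hc) (mul_pos hb1 hd)]
        have heq : c * (β1 / a) + d * 0 - β2 = (c * β1 - a * β2) / a := by
          field_simp
          ring
        rw [heq]
        exact div_nonneg hkey ha.le
    · rw [max_eq_left hb2.le] at hy2
      subst hy2
      have h1 : β1 - c * (β2 / d) ≤ 0 := by
        rw [sub_nonpos, ← mul_div_assoc, le_div_iff₀ hd]
        nlinarith
      rw [max_eq_right h1, zero_div] at hy1
      subst hy1
      rw [mul_zero, zero_add, mul_div_cancel₀ _ hd.ne']
      exact ⟨by simp, by ring⟩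
  · -- t = u > 0
    have ht : max ((d * β1 - β2 * c) / (a * d - c ^ 2)) 0
        = (d * β1 - β2 * c) / (a * d - c ^ 2) :=
      max_eq_left (le_of_lt (div_pos hu hD))
    rw [ht] at hy2
    have hre : β2 - c * ((d * β1 - β2 * c) / (a * d - c ^ 2))
        = d * ((a * β2 - c * β1) / (a * d - c ^ 2)) := by
      linear_combination (-β2) * mul_inv_cancel₀ hD.ne'
    rw [hre] at hy2
    rcases le_or_gt (a * β2 - c * β1) 0 with hv | hv
    · -- y₂ = 0
      have hmv : max (d * ((a * β2 - c * β1) / (a * d - c ^ 2))) 0 = 0 :=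
        max_eq_right (mul_nonpos_of_nonneg_of_nonpos hd.le
          (div_nonpos_of_nonpos_of_nonneg hv hD.le))
      rw [hmv, zero_div] at hy2
      subst hy2
      rw [mul_zero, sub_zero] at hy1
      rcases le_or_gt β1 0 with hb1 | hb1
      · rw [max_eq_right hb1, zero_div] at hy1
        subst hy1
        have hb2 : β2 ≤ 0 := by
          by_contra hcon
          push_neg at hcon
          have hc : c < 0 := by nlinarith
          nlinarith [mul_pos hu (neg_pos.mpr hc), mul_pos hD hcon,
            mul_nonpos_of_nonpos_of_nonneg hv hd.le]
        exact ⟨by nlinarith, by ring⟩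
      · rw [max_eq_left hb1.le] at hy1
        subst hy1
        refine ⟨?_, by ring⟩
        have hkey : 0 ≤ c * β1 - a * β2 := by linarith
        have heq : c * (β1 / a) + d * 0 - β2 = (c * β1 - a * β2) / a := by
          field_simp
          ring
        rw [heq]
        exact div_nonneg hkey ha.le
    · -- interior solution
      have hmv : max (d * ((a * β2 - c * β1) / (a * d - c ^ 2))) 0
          = d * ((a * β2 - c * β1) / (a * d - c ^ 2)) :=
        max_eq_left (le_of_lt (mul_pos hd (div_pos hv hD)))
      rw [hmv, mul_div_cancel_left₀ _ hd.ne'] at hy2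
      have h1 : β1 - c * y₂ = a * ((d * β1 - c * β2) / (a * d - c ^ 2)) := by
        rw [hy2]; field_simp; ring
      have h1' : 0 ≤ β1 - c * y₂ := by
        rw [h1]
        exact mul_nonneg ha.le (div_nonneg (by nlinarith) hD.le)
      rw [max_eq_left h1', h1, mul_div_cancel_left₀ _ ha.ne'] at hy1
      have hz : c * y₁ + d * y₂ - β2 = 0 := by
        rw [hy1, hy2]
        linear_combination β2 * mul_inv_cancel₀ hD.ne'
      exact ⟨le_of_eq hz.symm, by rw [hz]; ring⟩
open scoped RealInnerProductSpace

set_option maxHeartbeats 1000000 in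
theorem stmt7 {m : ℕ} (g₁ g₂ b : EuclideanSpace ℝ (Fin m))
    (hG : LinearIndependent ℝ ![g₁, g₂]) :
    let y₂ : ℝ := (max (⟪b, g₂⟫ - ⟪g₂, g₁⟫ *
        max ((‖g₂‖ ^ 2 * ⟪b, g₁⟫ - ⟪b, g₂⟫ * ⟪g₂, g₁⟫) /
          (‖g₁‖ ^ 2 * ‖g₂‖ ^ 2 - ⟪g₁, g₂⟫ ^ 2)) 0) 0) / ‖g₂‖ ^ 2
    let y₁ : ℝ := (max (⟪b, g₁⟫ - ⟪g₂, g₁⟫ * y₂) 0) / ‖g₁‖ ^ 2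
    (0 ≤ y₁ ∧ 0 ≤ y₂) ∧
    (∀ z₁ z₂ : ℝ, 0 ≤ z₁ → 0 ≤ z₂ →
        ‖y₁ • g₁ + y₂ • g₂ - b‖ ≤ ‖z₁ • g₁ + z₂ • g₂ - b‖) ∧
    (∀ z₁ z₂ : ℝ, 0 ≤ z₁ → 0 ≤ z₂ →
        (∀ w₁ w₂ : ℝ, 0 ≤ w₁ → 0 ≤ w₂ →
          ‖z₁ • g₁ + z₂ • g₂ - b‖ ≤ ‖w₁ • g₁ + w₂ • g₂ - b‖) →
        z₁ = y₁ ∧ z₂ = y₂) := by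
  intro y₂ y₁
  have hy2 : y₂ = (max (⟪b, g₂⟫ - ⟪g₂, g₁⟫ *
        max ((‖g₂‖ ^ 2 * ⟪b, g₁⟫ - ⟪b, g₂⟫ * ⟪g₂, g₁⟫) /
          (‖g₁‖ ^ 2 * ‖g₂‖ ^ 2 - ⟪g₁, g₂⟫ ^ 2)) 0) 0) / ‖g₂‖ ^ 2 := rfl
  have hy1 : y₁ = (max (⟪b, g₁⟫ - ⟪g₂, g₁⟫ * y₂) 0) / ‖g₁‖ ^ 2 := rfl
  have hcomm : (⟪g₂, g₁⟫ : ℝ) = ⟪g₁, g₂⟫ := real_inner_comm _ _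
  rw [hcomm] at hy2 hy1
  clear_value y₂ y₁
  have hg1 : g₁ ≠ 0 := by have := hG.ne_zero 0; simpa using this
  have hg2 : g₂ ≠ 0 := by have := hG.ne_zero 1; simpa using this
  have ha : (0:ℝ) < ‖g₁‖ ^ 2 := pow_pos (norm_pos_iff.mpr hg1) 2
  have hd : (0:ℝ) < ‖g₂‖ ^ 2 := pow_pos (norm_pos_iff.mpr hg2) 2
  have hpair := LinearIndependent.pair_iff.mp hG
  have hD : (0:ℝ) < ‖g₁‖ ^ 2 * ‖g₂‖ ^ 2 - ⟪g₁, g₂⟫ ^ 2 := by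
    have hCS : ⟪g₁, g₂⟫ ^ 2 ≤ ‖g₁‖ ^ 2 * ‖g₂‖ ^ 2 := by
      have h := real_inner_mul_inner_self_le g₁ g₂
      rw [real_inner_self_eq_norm_sq, real_inner_self_eq_norm_sq] at h
      nlinarith [h]
    rcases lt_or_eq_of_le hCS with h | h
    · linarith
    · exfalso
      have hvnorm : ⟪‖g₂‖ ^ 2 • g₁ - ⟪g₁, g₂⟫ • g₂, ‖g₂‖ ^ 2 • g₁ - ⟪g₁, g₂⟫ • g₂⟫
          = ‖g₂‖ ^ 2 * (‖g₁‖ ^ 2 * ‖g₂‖ ^ 2 - ⟪g₁, g₂⟫ ^ 2) := by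
        simp only [inner_sub_left, inner_sub_right, real_inner_smul_left,
          real_inner_smul_right, real_inner_comm g₂ g₁]
        rw [real_inner_self_eq_norm_sq, real_inner_self_eq_norm_sq]
        ring
      have hv0 : ‖g₂‖ ^ 2 • g₁ - ⟪g₁, g₂⟫ • g₂ = 0 := by
        rw [← @inner_self_eq_zero ℝ, hvnorm, ← h]
        ring
      have := (hpair (‖g₂‖ ^ 2) (-⟪g₁, g₂⟫)
        (by rw [neg_smul, ← sub_eq_add_neg]; exact hv0)).1
      exact hd.ne' this
  -- KKT conditions
  have hay1 : ‖g₁‖ ^ 2 * y₁ = max (⟪b, g₁⟫ - ⟪g₁, g₂⟫ * y₂) 0 := by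
    rw [hy1, mul_div_cancel₀ _ ha.ne']
  have hs1 : 0 ≤ ‖g₁‖ ^ 2 * y₁ + ⟪g₁, g₂⟫ * y₂ - ⟪b, g₁⟫ := by
    have := le_max_left (⟪b, g₁⟫ - ⟪g₁, g₂⟫ * y₂) 0
    rw [← hay1] at this
    linarith
  have hy1nn : 0 ≤ y₁ := by
    rw [hy1]; exact div_nonneg (le_max_right _ _) ha.le
  have hy2nn : 0 ≤ y₂ := by
    rw [hy2]; exact div_nonneg (le_max_right _ _) hd.le
  have hcs1 : y₁ * (‖g₁‖ ^ 2 * y₁ + ⟪g₁, g₂⟫ * y₂ - ⟪b, g₁⟫) = 0 := by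
    rcases le_or_gt (⟪b, g₁⟫ - ⟪g₁, g₂⟫ * y₂) 0 with h | h
    · have hz : y₁ = 0 := by rw [hy1, max_eq_right h, zero_div]
      rw [hz, zero_mul]
    · have he : ‖g₁‖ ^ 2 * y₁ = ⟪b, g₁⟫ - ⟪g₁, g₂⟫ * y₂ := by
        rw [hay1, max_eq_left h.le]
      have : ‖g₁‖ ^ 2 * y₁ + ⟪g₁, g₂⟫ * y₂ - ⟪b, g₁⟫ = 0 := by linarith
      rw [this, mul_zero]
  have hkkt2 := key_real (‖g₁‖ ^ 2) (‖g₂‖ ^ 2) ⟪g₁, g₂⟫ ⟪b, g₁⟫ ⟪b, g₂⟫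
    y₂ y₁ ha hd hD hy2 hy1
  have hs2 : 0 ≤ ⟪g₁, g₂⟫ * y₁ + ‖g₂‖ ^ 2 * y₂ - ⟪b, g₂⟫ := hkkt2.1
  have hcs2 : y₂ * (⟪g₁, g₂⟫ * y₁ + ‖g₂‖ ^ 2 * y₂ - ⟪b, g₂⟫) = 0 := hkkt2.2
  -- residual inner products
  have hr1 : ⟪y₁ • g₁ + y₂ • g₂ - b, g₁⟫
      = ‖g₁‖ ^ 2 * y₁ + ⟪g₁, g₂⟫ * y₂ - ⟪b, g₁⟫ := by
    simp only [inner_sub_left, inner_add_left, real_inner_smul_left,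
      real_inner_comm g₂ g₁]
    rw [real_inner_self_eq_norm_sq]
    ring
  have hr2 : ⟪y₁ • g₁ + y₂ • g₂ - b, g₂⟫
      = ⟪g₁, g₂⟫ * y₁ + ‖g₂‖ ^ 2 * y₂ - ⟪b, g₂⟫ := by
    simp only [inner_sub_left, inner_add_left, real_inner_smul_left,
      real_inner_comm g₂ g₁]
    rw [real_inner_self_eq_norm_sq]
    ring
  -- key inequality
  have hkey : ∀ z₁ z₂ : ℝ, 0 ≤ z₁ → 0 ≤ z₂ →
      ‖y₁ • g₁ + y₂ • g₂ - b‖ ^ 2 + ‖(z₁ - y₁) • g₁ + (z₂ - y₂) • g₂‖ ^ 2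
        ≤ ‖z₁ • g₁ + z₂ • g₂ - b‖ ^ 2 := by
    intro z₁ z₂ hz1 hz2
    have hsum : z₁ • g₁ + z₂ • g₂ - b =
        (y₁ • g₁ + y₂ • g₂ - b) + ((z₁ - y₁) • g₁ + (z₂ - y₂) • g₂) := by
      module
    have hexp : ‖z₁ • g₁ + z₂ • g₂ - b‖ ^ 2 =
        ‖y₁ • g₁ + y₂ • g₂ - b‖ ^ 2
        + 2 * ⟪y₁ • g₁ + y₂ • g₂ - b, (z₁ - y₁) • g₁ + (z₂ - y₂) • g₂⟫
        + ‖(z₁ - y₁) • g₁ + (z₂ - y₂) • g₂‖ ^ 2 := by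
      rw [hsum]; exact norm_add_sq_real _ _
    have hinner : ⟪y₁ • g₁ + y₂ • g₂ - b, (z₁ - y₁) • g₁ + (z₂ - y₂) • g₂⟫
        = z₁ * (‖g₁‖ ^ 2 * y₁ + ⟪g₁, g₂⟫ * y₂ - ⟪b, g₁⟫)
          + z₂ * (⟪g₁, g₂⟫ * y₁ + ‖g₂‖ ^ 2 * y₂ - ⟪b, g₂⟫) := by
      rw [inner_add_right, real_inner_smul_right, real_inner_smul_right, hr1, hr2]
      nlinarith [hcs1, hcs2]
    nlinarith [hexp, hinner, mul_nonneg hz1 hs1, mul_nonneg hz2 hs2]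
  refine ⟨⟨hy1nn, hy2nn⟩, ?_, ?_⟩
  · intro z₁ z₂ hz1 hz2
    have h := hkey z₁ z₂ hz1 hz2
    have h2 : ‖y₁ • g₁ + y₂ • g₂ - b‖ ^ 2 ≤ ‖z₁ • g₁ + z₂ • g₂ - b‖ ^ 2 := by
      nlinarith [sq_nonneg ‖(z₁ - y₁) • g₁ + (z₂ - y₂) • g₂‖]
    exact le_of_pow_le_pow_left₀ two_ne_zero (norm_nonneg _) h2
  · intro z₁ z₂ hz1 hz2 hmin
    have h1 : ‖z₁ • g₁ + z₂ • g₂ - b‖ ≤ ‖y₁ • g₁ + y₂ • g₂ - b‖ :=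
      hmin y₁ y₂ hy1nn hy2nn
    have h1' : ‖z₁ • g₁ + z₂ • g₂ - b‖ ^ 2 ≤ ‖y₁ • g₁ + y₂ • g₂ - b‖ ^ 2 :=
      pow_le_pow_left₀ (norm_nonneg _) h1 2
    have h2 := hkey z₁ z₂ hz1 hz2
    have hwnorm : ‖(z₁ - y₁) • g₁ + (z₂ - y₂) • g₂‖ = 0 := by
      nlinarith [norm_nonneg ((z₁ - y₁) • g₁ + (z₂ - y₂) • g₂)]
    have hw0 : (z₁ - y₁) • g₁ + (z₂ - y₂) • g₂ = 0 := norm_eq_zero.mp hwnorm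
    obtain ⟨e1, e2⟩ := hpair (z₁ - y₁) (z₂ - y₂) hw0
    constructor
    · linarith [sub_eq_zero.mp e1]
    · linarith [sub_eq_zero.mp e2]
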